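/- Let L > 0, μ > 0, let g^u, g^v ∈ C²([0,L];ℝ) with (g^u)'(x) ≥ μ for all x ∈ [0,L], let â ∈ C¹([0,L];ℝ) with â(L) = 0, let f̂ : ℝ → ℝ be continuous, and let ǔ, v̌ : [0,L] → ℝ be continuous. Assume (â·(g^u)')'(x) + f̂(g^u(x)) = ǔ(x) and (â·(g^v)')'(x) + f̂(g^v(x)) = v̌(x) for all x ∈ [0,L]. Set G(x) = (g^v)'(x)/(g^u)'(x). Then for all x ∈ [0,L]: f̂(g^v(x)) − G(x)·f̂(g^u(x)) + G'(x)·∫_x^L f̂(g^u(ξ)) dξ = v̌(x) − G(x)·ǔ(x) + G'(x)·∫_x^L ǔ(ξ) dξ. -/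

import Mathlib

open Set intervalIntegral

/-- The first-kind Volterra-type identity for the nonlinearity difference `fhat`,
obtained by eliminating `ahat`, dividing by `(g^u)'` and differentiating. -/
theorem volterra_identity_for_fhat
    (L μ : ℝ) (hL : 0 < L) (hμ : 0 < μ)
    (gu gv : ℝ → ℝ) (hgu : ContDiff ℝ 2 gu) (hgv : ContDiff ℝ 2 gv)
    (hgu' : ∀ x ∈ Icc (0:ℝ) L, μ ≤ deriv gu x)
    (ahat : ℝ → ℝ) (hahat : ContDiff ℝ 1 ahat) (hahatL : ahat L = 0)
    (fhat : ℝ → ℝ) (hfhat : Continuous fhat)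
    (ucheck vcheck : ℝ → ℝ) (hucheck : Continuous ucheck) (hvcheck : Continuous vcheck)
    (hequ : ∀ x ∈ Icc (0:ℝ) L,
      deriv (fun y => ahat y * deriv gu y) x + fhat (gu x) = ucheck x)
    (heqv : ∀ x ∈ Icc (0:ℝ) L,
      deriv (fun y => ahat y * deriv gv y) x + fhat (gv x) = vcheck x) :
    ∀ x ∈ Icc (0:ℝ) L,
      fhat (gv x) - (deriv gv x / deriv gu x) * fhat (gu x) +
        deriv (fun y => deriv gv y / deriv gu y) x * (∫ ξ in x..L, fhat (gu ξ)) =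
      vcheck x - (deriv gv x / deriv gu x) * ucheck x +
        deriv (fun y => deriv gv y / deriv gu y) x * (∫ ξ in x..L, ucheck ξ) := by
  intro x hx
  have hgu1 : ContDiff ℝ 1 (deriv gu) :=
    (contDiff_succ_iff_deriv.mp (show ContDiff ℝ (1 + 1) gu from hgu)).2.2
  have hgv1 : ContDiff ℝ 1 (deriv gv) :=
    (contDiff_succ_iff_deriv.mp (show ContDiff ℝ (1 + 1) gv from hgv)).2.2
  have hgux : deriv gu x ≠ 0 := ne_of_gt (lt_of_lt_of_le hμ (hgu' x hx))
  have hne : ∀ᶠ y in nhds x, deriv gu y ≠ 0 :=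
    (hgu1.continuous.continuousAt).eventually_ne hgux
  have hGdiff : DifferentiableAt ℝ (fun y => deriv gv y / deriv gu y) x :=
    (hgv1.differentiable one_ne_zero x).div (hgu1.differentiable one_ne_zero x) hgux
  have hA : ContDiff ℝ 1 (fun y => ahat y * deriv gu y) := hahat.mul hgu1
  have hB : ContDiff ℝ 1 (fun y => ahat y * deriv gv y) := hahat.mul hgv1
  -- product rule: B = A * G near x
  have hBeq : (fun y => ahat y * deriv gv y) =ᶠ[nhds x]
      fun y => (ahat y * deriv gu y) * (deriv gv y / deriv gu y) := by
    filter_upwards [hne] with y hy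
    field_simp
  have hderivB : deriv (fun y => ahat y * deriv gv y) x
      = deriv (fun y => ahat y * deriv gu y) x * (deriv gv x / deriv gu x)
        + (ahat x * deriv gu x) * deriv (fun y => deriv gv y / deriv gu y) x := by
    rw [hBeq.deriv_eq, deriv_fun_mul (hA.differentiable one_ne_zero x) hGdiff]
  -- integral of deriv A
  have hsub : uIcc x L ⊆ Icc 0 L := by
    rw [uIcc_of_le hx.2]
    exact Icc_subset_Icc hx.1 le_rfl
  have hint : (∫ ξ in x..L, ucheck ξ) - ∫ ξ in x..L, fhat (gu ξ)
      = - (ahat x * deriv gu x) := by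
    have h1 : (∫ ξ in x..L, ucheck ξ) - ∫ ξ in x..L, fhat (gu ξ)
        = ∫ ξ in x..L, (ucheck ξ - fhat (gu ξ)) :=
      (intervalIntegral.integral_sub (hucheck.intervalIntegrable _ _)
        ((hfhat.comp hgu.continuous).intervalIntegrable _ _)).symm
    rw [h1]
    have h2 : EqOn (fun ξ => ucheck ξ - fhat (gu ξ))
        (fun ξ => deriv (fun y => ahat y * deriv gu y) ξ) (uIcc x L) := by
      intro ξ hξ
      have := hequ ξ (hsub hξ)
      simp only
      linarith
    rw [intervalIntegral.integral_congr h2,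
      intervalIntegral.integral_deriv_eq_sub
        (fun y _ => hA.differentiable one_ne_zero y)
        ((hA.continuous_deriv le_rfl).intervalIntegrable _ _)]
    simp [hahatL]
  have hu := hequ x hx
  have hv := heqv x hx
  rw [← hu, ← hv]
  linear_combination (-1 : ℝ) * hderivB
    - deriv (fun y => deriv gv y / deriv gu y) x * hint
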